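/- In the parallel execution of ARC and OPT, after phase P(0), when ARC serves a request on which it misses and the requested page is in neither B₁ nor B₂ (so ARC evicts LRU(L₁) if ℓ₁ = N, or evicts LRU(L₂) if ℓ₁ < N and the directory is full, calls REPLACE, and inserts the page at MRU(T₁)), the change in the potential Φ = p − [(b₁'−t) + 2(t₁'−t) + 3(b₂'−t) + 4(t₂'−t)] satisfies ΔΦ ≤ −1 in both cases. -/

import Mathlib

abbrev Page := ℕ

/-- A valid offline demand-paging execution with cache size `N` on request
sequence `σ`, starting from the empty cache. `C i` is the cache just before
serving request `i` (so `C (i+1)` is the cache just after serving it).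
Demand paging: on a hit the cache is unchanged; on a fault only the requested
page may be brought in. -/
def OptExec (N : ℕ) (σ : List Page) (C : ℕ → Finset Page) : Prop :=
  C 0 = ∅ ∧
  (∀ i, (C i).card ≤ N) ∧
  ∀ i, i < σ.length →
    σ.getD i 0 ∈ C (i + 1) ∧
    C (i + 1) ⊆ C i ∪ {σ.getD i 0} ∧
    (σ.getD i 0 ∈ C i → C (i + 1) = C i)

/-- Number of page faults incurred by an offline execution `C` on `σ`. -/
def optFaults (σ : List Page) (C : ℕ → Finset Page) : ℕ :=
  ((List.range σ.length).filter (fun i => decide (σ.getD i 0 ∉ C i))).length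

/-- The fault count of an optimal offline demand-paging algorithm (OPT)
with cache size `N` on `σ`. -/
noncomputable def optCost (N : ℕ) (σ : List Page) : ℕ :=
  sInf {k | ∃ C, OptExec N σ C ∧ optFaults σ C = k}

/-- The state of the ARC cache: main lists `T1`, `T2` and history lists
`B1`, `B2` (each kept in recency order, MRU at the head, LRU at the end),
together with the adaptive parameter `p`. -/
structure ArcState where
  T1 : List Page
  T2 : List Page
  B1 : List Page
  B2 : List Page
  p  : ℕ

/-- ARC starts with empty lists and `p = 0`. -/
def ArcState.init : ArcState := ⟨[], [], [], [], 0⟩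

/-- ARC's subroutine REPLACE: demote `LRU(T1)` to the MRU position of `B1`
if `|T1| ≥ 1` and either (the requested page was in `B2` and `|T1| = p`) or
`|T1| > p`; otherwise demote `LRU(T2)` to the MRU position of `B2`. -/
def arcReplace (xInB2 : Bool) (s : ArcState) : ArcState :=
  if 1 ≤ s.T1.length ∧ ((xInB2 = true ∧ s.T1.length = s.p) ∨ s.p < s.T1.length) then
    { s with T1 := s.T1.dropLast, B1 := s.T1.getLast?.toList ++ s.B1 }
  else
    { s with T2 := s.T2.dropLast, B2 := s.T2.getLast?.toList ++ s.B2 }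

/-- One step of ARC (cache size `N`, with the ±1 adaptation rule) on a
requested page `x`. -/
def arcStep (N : ℕ) (s : ArcState) (x : Page) : ArcState :=
  if x ∈ s.T1 ∨ x ∈ s.T2 then
    -- cache hit: move `x` to the MRU position of `T2`
    { s with T1 := s.T1.erase x, T2 := x :: s.T2.erase x }
  else if x ∈ s.B1 then
    -- history hit in B1: adapt `p := min (p+1) N`, REPLACE, move `x` to MRU(T2)
    let s2 := arcReplace false { s with p := min (s.p + 1) N }
    { s2 with B1 := s2.B1.erase x, T2 := x :: s2.T2 }
  else if x ∈ s.B2 then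
    -- history hit in B2: adapt `p := max (p-1) 0`, REPLACE, move `x` to MRU(T2)
    let s2 := arcReplace true { s with p := s.p - 1 }
    { s2 with B2 := s2.B2.erase x, T2 := x :: s2.T2 }
  else
    -- cache and directory miss
    let s2 :=
      if s.T1.length + s.B1.length = N then
        if s.T1.length < N then
          arcReplace false { s with B1 := s.B1.dropLast }
        else
          { s with T1 := s.T1.dropLast }
      else if s.T1.length + s.B1.length < N ∧
          N ≤ s.T1.length + s.T2.length + s.B1.length + s.B2.length then
        arcReplace false
          (if s.T1.length + s.T2.length + s.B1.length + s.B2.length = 2 * N then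
            { s with B2 := s.B2.dropLast }
          else s)
      else s
    { s2 with T1 := x :: s2.T1 }

/-- Run ARC on a request sequence. -/
def arcRun (N : ℕ) : ArcState → List Page → ArcState
  | s, [] => s
  | s, x :: xs => arcRun N (arcStep N s x) xs

/-- Number of page faults incurred by ARC on a request sequence. -/
def arcCost (N : ℕ) : ArcState → List Page → ℕ
  | _, [] => 0
  | s, x :: xs => (if x ∈ s.T1 ∨ x ∈ s.T2 then 0 else 1) + arcCost N (arcStep N s x) xs

/-- `t = t₁ + t₂`, the number of pages in ARC's cache. -/
def arcT (s : ArcState) : ℕ := s.T1.length + s.T2.length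

/-- `TOP(X)` for a recency-ordered list `X`: the longest prefix (i.e. the
largest set of most-recently-used pages) of `X` all of whose pages are in
OPT's cache `O`; `topLen` is its size. -/
def topLen (X : List Page) (O : Finset Page) : ℕ :=
  (X.takeWhile (fun q => decide (q ∈ O))).length

/-- `t₁' = |TOP(T1)|`. -/
def arcT1' (s : ArcState) (O : Finset Page) : ℕ := topLen s.T1 O

/-- `t₂' = |TOP(T2)|`. -/
def arcT2' (s : ArcState) (O : Finset Page) : ℕ := topLen s.T2 O

/-- `b₁' = |TOP(L1) ∩ B1|` where `L1 = T1 · B1`. -/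
def arcB1' (s : ArcState) (O : Finset Page) : ℕ :=
  (((s.T1 ++ s.B1).takeWhile (fun q => decide (q ∈ O))).filter
    (fun q => decide (q ∈ s.B1))).length

/-- `b₂' = |TOP(L2) ∩ B2|` where `L2 = T2 · B2`. -/
def arcB2' (s : ArcState) (O : Finset Page) : ℕ :=
  (((s.T2 ++ s.B2).takeWhile (fun q => decide (q ∈ O))).filter
    (fun q => decide (q ∈ s.B2))).length

/-- The potential `Φ = p − [(b₁'−t) + 2(t₁'−t) + 3(b₂'−t) + 4(t₂'−t)]`
with the value `t` supplied explicitly. -/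
def arcPhiAt (s : ArcState) (O : Finset Page) (t : ℤ) : ℤ :=
  (s.p : ℤ) - (((arcB1' s O : ℤ) - t) + 2 * ((arcT1' s O : ℤ) - t)
    + 3 * ((arcB2' s O : ℤ) - t) + 4 * ((arcT2' s O : ℤ) - t))

/-- The potential `Φ = p − [(b₁'−t) + 2(t₁'−t) + 3(b₂'−t) + 4(t₂'−t)]`. -/
def arcPhi (s : ArcState) (O : Finset Page) : ℤ :=
  arcPhiAt s O (arcT s)

/-- ARC's cache directory: all pages it tracks. -/
def arcDir (s : ArcState) : List Page := s.T1 ++ s.T2 ++ s.B1 ++ s.B2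

namespace ArcAux

lemma takeWhile_take {α} (p : α → Bool) : ∀ (l : List α) (n : ℕ),
    (l.take n).takeWhile p = (l.takeWhile p).take n
  | [], n => by simp
  | a :: l, 0 => by simp
  | a :: l, n+1 => by
      by_cases h : p a
      · simp [List.takeWhile_cons, h, takeWhile_take p l n]
      · simp [List.takeWhile_cons, h]

lemma takeWhile_dropLast {α} (p : α → Bool) (l : List α)
    (h : (l.takeWhile p).length < l.length) :
    l.dropLast.takeWhile p = l.takeWhile p := by
  rw [List.dropLast_eq_take, takeWhile_take, List.take_of_length_le (by omega)]

lemma topLen_le_card {l : List Page} {O : Finset Page} (h : l.Nodup) :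
    topLen l O ≤ O.card := by
  have hsub : List.Sublist (l.takeWhile (fun q => decide (q ∈ O))) l := List.takeWhile_sublist _
  have hnd : (l.takeWhile (fun q => decide (q ∈ O))).Nodup := hsub.nodup h
  have hmem : ∀ q ∈ l.takeWhile (fun q => decide (q ∈ O)), q ∈ O := by
    intro q hq; simpa using List.mem_takeWhile_imp hq
  calc (l.takeWhile (fun q => decide (q ∈ O))).length
      = (l.takeWhile (fun q => decide (q ∈ O))).toFinset.card :=
        (List.toFinset_card_of_nodup hnd).symm
    _ ≤ O.card := Finset.card_le_card (fun q hq => hmem q (List.mem_toFinset.mp hq))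

lemma topLen_cons {l : List Page} {O : Finset Page} {x : Page} (hx : x ∈ O) :
    topLen (x :: l) O = topLen l O + 1 := by
  simp [topLen, List.takeWhile_cons, hx]

lemma topLen_fresh {l : List Page} {O : Finset Page} {x : Page}
    (hnd : l.Nodup) (hx : x ∈ O) (hxl : x ∉ l) : topLen l O + 1 ≤ O.card := by
  have h1 : (x :: l).Nodup := List.nodup_cons.mpr ⟨hxl, hnd⟩
  have := topLen_le_card (O := O) h1
  rwa [topLen_cons hx] at this

def ft (A B : List Page) (O : Finset Page) : ℕ :=
  (((A ++ B).takeWhile (fun q => decide (q ∈ O))).filter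
    (fun q => decide (q ∈ B))).length

lemma ft_cons {A B : List Page} {O : Finset Page} {x : Page}
    (hx : x ∈ O) (hxB : x ∉ B) : ft (x :: A) B O = ft A B O := by
  simp [ft, List.takeWhile_cons, hx, List.filter_cons, hxB]

lemma ft_dropLast_B (A B : List Page) (O : Finset Page)
    (hnd : (A ++ B).Nodup) (hB : B ≠ []) (hlt0 : topLen (A ++ B) O < (A ++ B).length) :
    ft A B.dropLast O = ft A B O := by
  have hlt : ((A ++ B).takeWhile (fun q => decide (q ∈ O))).length < (A ++ B).length := hlt0
  have hAB : A ++ B ≠ [] := by simp [hB]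
  have h1 : A ++ B.dropLast = (A ++ B).dropLast := (List.dropLast_append_of_ne_nil (l' := A) hB).symm
  have h2 : (A ++ B).dropLast.takeWhile (fun q => decide (q ∈ O))
      = (A ++ B).takeWhile (fun q => decide (q ∈ O)) := takeWhile_dropLast _ _ hlt
  set y := (A ++ B).getLast hAB with hy
  have hyB : y = B.getLast hB := by rw [hy]; exact List.getLast_append_of_ne_nil _ hB
  have hsplit : (A ++ B).dropLast ++ [y] = A ++ B := List.dropLast_append_getLast hAB
  have hyd : y ∉ (A ++ B).dropLast := by
    intro hm
    have hnd2 : ((A ++ B).dropLast ++ [y]).Nodup := by rw [hsplit]; exact hnd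
    rw [List.nodup_append] at hnd2
    exact hnd2.2.2 y hm y (by simp) rfl
  have hcongr : ∀ q ∈ (A ++ B).takeWhile (fun q => decide (q ∈ O)),
      decide (q ∈ B.dropLast) = decide (q ∈ B) := by
    intro q hq
    have hqd : q ∈ (A ++ B).dropLast := by
      rw [← h2] at hq
      exact (List.takeWhile_sublist _).subset hq
    have hqy : q ≠ y := fun h => hyd (h ▸ hqd)
    have : q ∈ B.dropLast ↔ q ∈ B := by
      constructor
      · exact fun h => (List.dropLast_sublist B).subset h
      · intro h
        have hBsplit : B.dropLast ++ [B.getLast hB] = B := List.dropLast_append_getLast hB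
        rw [← hBsplit] at h
        rcases List.mem_append.mp h with h | h
        · exact h
        · exact absurd (by simpa using h) (hyB ▸ hqy)
    exact decide_eq_decide.mpr this
  calc ft A B.dropLast O
      = (((A ++ B).takeWhile (fun q => decide (q ∈ O))).filter
          (fun q => decide (q ∈ B.dropLast))).length := by rw [ft, h1, h2]
    _ = ft A B O := by rw [List.filter_congr hcongr]; rfl

lemma key_replace (c : ℕ) (A B : List Page) (O : Finset Page) (hA : A ≠ [])
    (hnd : (A ++ B).Nodup) :
    c * ft A B O + (c + 1) * topLen A O ≤
      c * ft A.dropLast (A.getLast hA :: B) O + (c + 1) * topLen A.dropLast O + 1 := by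
  set y := A.getLast hA with hy
  have hsplit : A.dropLast ++ [y] = A := List.dropLast_append_getLast hA
  have hlist : A.dropLast ++ (y :: B) = A ++ B := by
    rw [show y :: B = [y] ++ B from rfl, ← List.append_assoc, hsplit]
  rw [List.nodup_append] at hnd
  obtain ⟨hndA, hndB, hdisj⟩ := hnd
  have hyA : y ∈ A := hy ▸ List.getLast_mem hA
  have hydrop : y ∉ A.dropLast := by
    have hnd2 : (A.dropLast ++ [y]).Nodup := by rw [hsplit]; exact hndA
    rw [List.nodup_append] at hnd2
    exact fun hm => hnd2.2.2 y hm y (by simp) rfl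
  by_cases hall : ∀ a ∈ A, a ∈ O
  · -- all of A is in O
    have htwA : A.takeWhile (fun q => decide (q ∈ O)) = A :=
      List.takeWhile_eq_self_iff.mpr (by intro a ha; simp [hall a ha])
    have htopA : topLen A O = A.length := by rw [topLen, htwA]
    have htwAd : A.dropLast.takeWhile (fun q => decide (q ∈ O)) = A.dropLast :=
      List.takeWhile_eq_self_iff.mpr
        (by intro a ha; simp [hall a ((List.dropLast_sublist A).subset ha)])
    have htopAd : topLen A.dropLast O = A.length - 1 := by
      rw [topLen, htwAd, List.length_dropLast]
    have htwAB : (A ++ B).takeWhile (fun q => decide (q ∈ O))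
        = A ++ B.takeWhile (fun q => decide (q ∈ O)) := by
      rw [List.takeWhile_append, htwA, if_pos rfl]
    have hmemtwB : ∀ q ∈ B.takeWhile (fun q => decide (q ∈ O)), q ∈ B :=
      fun q hq => (List.takeWhile_sublist _).subset hq
    have hftold : ft A B O = topLen B O := by
      rw [ft, htwAB, List.filter_append]
      have h1 : A.filter (fun q => decide (q ∈ B)) = [] :=
        List.filter_eq_nil_iff.mpr (fun a ha => by
          simp only [decide_eq_true_eq]
          exact fun h => hdisj a ha a h rfl)
      have h2 : (B.takeWhile (fun q => decide (q ∈ O))).filter (fun q => decide (q ∈ B))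
          = B.takeWhile (fun q => decide (q ∈ O)) :=
        List.filter_eq_self.mpr (fun a ha => by simp [hmemtwB a ha])
      rw [h1, h2]; rfl
    have hftnew : ft A.dropLast (y :: B) O = topLen B O + 1 := by
      rw [ft, hlist, htwAB, List.filter_append]
      have h1 : A.filter (fun q => decide (q ∈ y :: B)) = A.filter (fun q => q == y) := by
        apply List.filter_congr
        intro q hq
        have hqB : q ∉ B := fun h => hdisj q hq q h rfl
        by_cases hqy : q = y <;> simp [hqy, hqB]
      have h2 : (A.filter (fun q => q == y)).length = 1 := by
        have : (A.filter (fun q => q == y)).length = A.count y := by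
          rw [List.count, List.countP_eq_length_filter]
        rw [this, List.count_eq_one_of_mem hndA hyA]
      have h3 : (B.takeWhile (fun q => decide (q ∈ O))).filter (fun q => decide (q ∈ y :: B))
          = B.takeWhile (fun q => decide (q ∈ O)) :=
        List.filter_eq_self.mpr (fun a ha => by simp [List.mem_cons, Or.inr (hmemtwB a ha)])
      rw [h1, h3, List.length_append, h2, topLen]
      omega
    have hlen : 1 ≤ A.length := List.length_pos_iff.mpr hA
    rw [hftold, hftnew, htopA, htopAd]
    have e1 : (c + 1) * (A.length - 1) + (c + 1) = (c + 1) * A.length := by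
      rw [← Nat.mul_succ]
      congr 1
      omega
    nlinarith [e1]
  · -- not all of A is in O
    push_neg at hall
    obtain ⟨a, haA, haO⟩ := hall
    have hlt : (A.takeWhile (fun q => decide (q ∈ O))).length < A.length := by
      rcases Nat.lt_or_ge (A.takeWhile (fun q => decide (q ∈ O))).length A.length with h | h
      · exact h
      · exfalso
        have heq : A.takeWhile (fun q => decide (q ∈ O)) = A :=
          (List.takeWhile_sublist _).eq_of_length
            (le_antisymm (List.takeWhile_sublist _).length_le h)
        have := List.mem_takeWhile_imp (heq ▸ haA)
        simp at this
        exact haO this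
    have htwd : A.dropLast.takeWhile (fun q => decide (q ∈ O))
        = A.takeWhile (fun q => decide (q ∈ O)) := takeWhile_dropLast _ _ hlt
    have htopd : topLen A.dropLast O = topLen A O := by rw [topLen, topLen, htwd]
    have htwAB : (A ++ B).takeWhile (fun q => decide (q ∈ O))
        = A.takeWhile (fun q => decide (q ∈ O)) := by
      rw [List.takeWhile_append, if_neg (by omega)]
    have hftnew : ft A.dropLast (y :: B) O = ft A B O := by
      rw [ft, hlist, ft, htwAB]
      apply congrArg
      apply List.filter_congr
      intro q hq
      have hqd : q ∈ A.dropLast := by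
        rw [← htwd] at hq
        exact (List.takeWhile_sublist _).subset hq
      have hqA : q ∈ A := (List.dropLast_sublist A).subset hqd
      have hqy : q ≠ y := fun h => hydrop (h ▸ hqd)
      have hqB : q ∉ B := fun h => hdisj q hqA q h rfl
      simp [List.mem_cons, hqy, hqB]
    rw [hftnew, htopd]
    omega

end ArcAux

namespace ArcAux

lemma count_eq_dropLast_add (A : List Page) (hA : A ≠ []) (a : Page) :
    List.count a A = List.count a A.dropLast + (if A.getLast hA = a then 1 else 0) := by
  conv_lhs => rw [← List.dropLast_append_getLast hA]
  rw [List.count_append]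
  simp [List.count_cons, beq_iff_eq]

lemma count_erase' (a x : Page) (l : List Page) :
    List.count a (l.erase x) = List.count a l - (if x = a then 1 else 0) := by
  rw [List.count_erase]
  simp [beq_iff_eq]

lemma nodup4 (l1 l2 l3 l4 : List Page)
    (h : ∀ a, List.count a l1 + List.count a l2 + List.count a l3 + List.count a l4 ≤ 1) :
    (l1 ++ l2 ++ l3 ++ l4).Nodup := by
  rw [List.nodup_iff_count_le_one]
  intro a
  have := h a
  simp only [List.count_append]
  omega

lemma count4 (l1 l2 l3 l4 : List Page) (h : (l1 ++ l2 ++ l3 ++ l4).Nodup) :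
    ∀ a, List.count a l1 + List.count a l2 + List.count a l3 + List.count a l4 ≤ 1 := by
  intro a
  have := List.nodup_iff_count_le_one.mp h a
  simp only [List.count_append] at this
  omega

lemma nodup2 (l1 l2 : List Page)
    (h : ∀ a, List.count a l1 + List.count a l2 ≤ 1) : (l1 ++ l2).Nodup := by
  rw [List.nodup_iff_count_le_one]
  intro a
  have := h a
  simp only [List.count_append]
  omega

lemma ft_nil (A : List Page) (O : Finset Page) : ft A [] O = 0 := by
  simp [ft]

lemma topLen_dropLast_eq {l : List Page} {O : Finset Page} (h : topLen l O < l.length) :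
    topLen l.dropLast O = topLen l O :=
  congrArg List.length (takeWhile_dropLast _ l h)

lemma arcPhi_eq (s : ArcState) (O : Finset Page) :
    arcPhi s O = (s.p : ℤ) - ((ft s.T1 s.B1 O : ℤ) + 2 * (topLen s.T1 O : ℤ)
      + 3 * (ft s.T2 s.B2 O : ℤ) + 4 * (topLen s.T2 O : ℤ)
      - 10 * ((s.T1.length : ℤ) + (s.T2.length : ℤ))) := by
  have e1 : arcB1' s O = ft s.T1 s.B1 O := rfl
  have e2 : arcB2' s O = ft s.T2 s.B2 O := rfl
  have e3 : arcT1' s O = topLen s.T1 O := rfl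
  have e4 : arcT2' s O = topLen s.T2 O := rfl
  have e5 : arcT s = s.T1.length + s.T2.length := rfl
  rw [arcPhi, arcPhiAt, e1, e2, e3, e4, e5]
  push_cast
  ring


def Inv (N : ℕ) (s : ArcState) : Prop :=
  (arcDir s).Nodup ∧
  s.T1.length + s.B1.length ≤ N ∧
  (arcDir s).length ≤ 2 * N ∧
  arcT s ≤ N ∧
  s.p ≤ N ∧
  (arcT s < N → s.B1 = [] ∧ s.B2 = [])

lemma arcReplace_pos (xb : Bool) (s : ArcState) (hne : s.T1 ≠ [])
    (h : 1 ≤ s.T1.length ∧ ((xb = true ∧ s.T1.length = s.p) ∨ s.p < s.T1.length)) :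
    arcReplace xb s = ⟨s.T1.dropLast, s.T2, s.T1.getLast hne :: s.B1, s.B2, s.p⟩ := by
  rw [arcReplace, if_pos h, List.getLast?_eq_getLast hne]
  rfl

lemma arcReplace_neg (xb : Bool) (s : ArcState) (hne : s.T2 ≠ [])
    (h : ¬(1 ≤ s.T1.length ∧ ((xb = true ∧ s.T1.length = s.p) ∨ s.p < s.T1.length))) :
    arcReplace xb s = ⟨s.T1, s.T2.dropLast, s.B1, s.T2.getLast hne :: s.B2, s.p⟩ := by
  rw [arcReplace, if_neg h, List.getLast?_eq_getLast hne]
  rfl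

lemma inv_step (N : ℕ) (hN : 1 ≤ N) (s : ArcState) (x : Page) (h : Inv N s) :
    Inv N (arcStep N s x) ∧
      arcT (arcStep N s x) =
        min N (arcT s + if x ∈ s.T1 ∨ x ∈ s.T2 then 0 else 1) := by
  obtain ⟨hnd, hl1, hdir, ht, hp, hemp⟩ := h
  have hcnt : ∀ a, List.count a s.T1 + List.count a s.T2 + List.count a s.B1
      + List.count a s.B2 ≤ 1 := count4 _ _ _ _ hnd
  have hdirlen : (arcDir s).length
      = s.T1.length + s.T2.length + s.B1.length + s.B2.length := by
    simp [arcDir]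
    omega
  by_cases hxT : x ∈ s.T1 ∨ x ∈ s.T2
  · -- cache hit
    have hstep : arcStep N s x = ⟨s.T1.erase x, x :: s.T2.erase x, s.B1, s.B2, s.p⟩ := by
      simp only [arcStep]
      rw [if_pos hxT]
    have hxc : 1 ≤ List.count x s.T1 + List.count x s.T2 := by
      rcases hxT with hx | hx
      · have := List.count_pos_iff.mpr hx; omega
      · have := List.count_pos_iff.mpr hx; omega
    have lT1 : (s.T1.erase x).length + (s.T2.erase x).length + 1
        = s.T1.length + s.T2.length := by
      rcases hxT with hx | hx
      · have hx2 : x ∉ s.T2 := by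
          have h1 := hcnt x
          have h2 := List.count_pos_iff.mpr hx
          intro hm; have := List.count_pos_iff.mpr hm; omega
        rw [List.erase_of_not_mem hx2, List.length_erase, if_pos hx]
        have : 1 ≤ s.T1.length := List.length_pos_iff.mpr (List.ne_nil_of_mem hx)
        omega
      · have hx1 : x ∉ s.T1 := by
          have h1 := hcnt x
          have h2 := List.count_pos_iff.mpr hx
          intro hm; have := List.count_pos_iff.mpr hm; omega
        rw [List.erase_of_not_mem hx1, List.length_erase, if_pos hx]
        have : 1 ≤ s.T2.length := List.length_pos_iff.mpr (List.ne_nil_of_mem hx)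
        omega
    have hT1e : (s.T1.erase x).length ≤ s.T1.length := (List.erase_sublist (a := x) (l := s.T1)).length_le
    have harct : arcT (arcStep N s x) = arcT s := by
      rw [hstep]; simp only [arcT, List.length_cons]; omega
    rw [hstep]
    refine ⟨⟨?_, ?_, ?_, ?_, hp, ?_⟩, ?_⟩
    · show ((s.T1.erase x) ++ (x :: s.T2.erase x) ++ s.B1 ++ s.B2).Nodup
      apply nodup4
      intro a
      have h0 := hcnt a
      have e1 := count_erase' a x s.T1
      have e2 := count_erase' a x s.T2
      simp only [List.count_cons, beq_iff_eq, e1, e2]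
      by_cases hxa : x = a
      · subst hxa
        have hone : (if x = x then 1 else 0) = 1 := if_pos rfl
        simp only [hone] at *
        omega
      · simp only [if_neg hxa] at *
        omega
    · show (s.T1.erase x).length + s.B1.length ≤ N
      omega
    · show ((s.T1.erase x) ++ (x :: s.T2.erase x) ++ s.B1 ++ s.B2).length ≤ 2 * N
      rw [hdirlen] at hdir
      simp only [List.length_append, List.length_cons]
      omega
    · show (s.T1.erase x).length + (x :: s.T2.erase x).length ≤ N
      have := ht
      simp only [arcT] at this
      simp only [List.length_cons]
      omega
    · intro h'
      have h'' : arcT s < N := by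
        have := h'
        simp only [arcT, List.length_cons] at this ⊢
        omega
      exact hemp h''
    · rw [← hstep, harct, if_pos hxT]
      have := ht
      simp only [arcT] at this ⊢
      omega
  · by_cases hxB1 : x ∈ s.B1
    · -- history hit in B1
      have hxT1 : x ∉ s.T1 := fun hx => hxT (Or.inl hx)
      have hxT2 : x ∉ s.T2 := fun hx => hxT (Or.inr hx)
      have hB1ne : s.B1 ≠ [] := List.ne_nil_of_mem hxB1
      have hb1pos : 1 ≤ s.B1.length := List.length_pos_iff.mpr hB1ne
      have htN : s.T1.length + s.T2.length = N := by
        have ht' : s.T1.length + s.T2.length ≤ N := ht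
        rcases Nat.eq_or_lt_of_le ht' with h | h
        · exact h
        · exact absurd (hemp h).1 hB1ne
      set p2 := min (s.p + 1) N with hp2
      have hp2le : p2 ≤ N := min_le_right _ _
      have hcx : List.count x s.B1 = 1 := by
        have h1 := hcnt x
        have h2 := List.count_pos_iff.mpr hxB1
        omega
      have hlB1e : (s.B1.erase x).length = s.B1.length - 1 := by
        rw [List.length_erase, if_pos hxB1]
      by_cases hcond : 1 ≤ s.T1.length ∧ p2 < s.T1.length
      · have hT1ne : s.T1 ≠ [] := by
          rw [← List.length_pos_iff]; omega
        set y := s.T1.getLast hT1ne with hy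
        have hyT1 : y ∈ s.T1 := by rw [hy]; exact List.getLast_mem hT1ne
        have hyx : ¬(y == x) = true := by
          simp only [beq_iff_eq]
          intro h0; exact hxT1 (h0 ▸ hyT1)
        have hstep : arcStep N s x =
            ⟨s.T1.dropLast, x :: s.T2, y :: s.B1.erase x, s.B2, p2⟩ := by
          have hrep := arcReplace_pos false ⟨s.T1, s.T2, s.B1, s.B2, p2⟩ hT1ne
            ⟨hcond.1, Or.inr hcond.2⟩
          simp only [arcStep, if_neg hxT, if_pos hxB1, ← hp2, hrep,
            List.erase_cons_tail hyx, ← hy]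
        have hlT1d : s.T1.dropLast.length = s.T1.length - 1 := List.length_dropLast
        rw [hstep]
        refine ⟨⟨?_, ?_, ?_, ?_, hp2le, ?_⟩, ?_⟩
        · show (s.T1.dropLast ++ (x :: s.T2) ++ (y :: s.B1.erase x) ++ s.B2).Nodup
          apply nodup4
          intro a
          have h0 := hcnt a
          have e1 := count_eq_dropLast_add s.T1 hT1ne a
          rw [← hy] at e1
          have e2 := count_erase' a x s.B1
          have hyc : 1 ≤ List.count y s.T1 := List.count_pos_iff.mpr hyT1
          simp only [List.count_cons, beq_iff_eq, e2]
          by_cases hxa : x = a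
          · have hya : ¬ y = a := by
              intro h'; apply hxT1; rw [hxa, ← h'] ; exact hyT1
            subst hxa
            have hz1 := List.count_eq_zero.mpr hxT1
            have hone : (if x = x then 1 else 0) = 1 := if_pos rfl
            simp only [hone, if_neg hya] at *
            omega
          · by_cases hya : y = a
            · subst hya
              have hone : (if y = y then 1 else 0) = 1 := if_pos rfl
              simp only [hone, if_neg hxa] at *
              omega
            · simp only [if_neg hxa, if_neg hya] at *
              omega
        · show s.T1.dropLast.length + (y :: s.B1.erase x).length ≤ N
          simp only [List.length_cons]
          omega
        · show (s.T1.dropLast ++ (x :: s.T2) ++ (y :: s.B1.erase x) ++ s.B2).length ≤ 2 * N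
          rw [hdirlen] at hdir
          simp only [List.length_append, List.length_cons]
          omega
        · show s.T1.dropLast.length + (x :: s.T2).length ≤ N
          simp only [List.length_cons]
          omega
        · intro h'
          exfalso
          have : s.T1.dropLast.length + (x :: s.T2).length < N := h'
          simp only [List.length_cons] at this
          omega
        · rw [if_neg hxT]
          show s.T1.dropLast.length + (x :: s.T2).length = min N (arcT s + 1)
          have ht' : arcT s = s.T1.length + s.T2.length := rfl
          simp only [List.length_cons, ht']
          omega
      · have hT2ne : s.T2 ≠ [] := by
          rw [← List.length_pos_iff]; omega
        set y2 := s.T2.getLast hT2ne with hy2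
        have hyT2 : y2 ∈ s.T2 := by rw [hy2]; exact List.getLast_mem hT2ne
        have hcond' : ¬(1 ≤ s.T1.length ∧
            ((false = true ∧ s.T1.length = p2) ∨ p2 < s.T1.length)) := by
          intro hcc
          rcases hcc.2 with ⟨hf, _⟩ | hlt2
          · simp at hf
          · exact hcond ⟨hcc.1, hlt2⟩
        have hstep : arcStep N s x =
            ⟨s.T1, x :: s.T2.dropLast, s.B1.erase x, y2 :: s.B2, p2⟩ := by
          have hrep := arcReplace_neg false ⟨s.T1, s.T2, s.B1, s.B2, p2⟩ hT2ne hcond'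
          simp only [arcStep, if_neg hxT, if_pos hxB1, ← hp2, hrep, ← hy2]
        have hlT2d : s.T2.dropLast.length = s.T2.length - 1 := List.length_dropLast
        rw [hstep]
        refine ⟨⟨?_, ?_, ?_, ?_, hp2le, ?_⟩, ?_⟩
        · show (s.T1 ++ (x :: s.T2.dropLast) ++ (s.B1.erase x) ++ (y2 :: s.B2)).Nodup
          apply nodup4
          intro a
          have h0 := hcnt a
          have e1 := count_eq_dropLast_add s.T2 hT2ne a
          rw [← hy2] at e1
          have e2 := count_erase' a x s.B1
          have hyc : 1 ≤ List.count y2 s.T2 := List.count_pos_iff.mpr hyT2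
          simp only [List.count_cons, beq_iff_eq, e2]
          by_cases hxa : x = a
          · have hya : ¬ y2 = a := by
              intro h'; apply hxT2; rw [hxa, ← h']; exact hyT2
            subst hxa
            have hz1 := List.count_eq_zero.mpr hxT2
            have hone : (if x = x then 1 else 0) = 1 := if_pos rfl
            simp only [hone, if_neg hya] at *
            omega
          · by_cases hya : y2 = a
            · subst hya
              have hone : (if y2 = y2 then 1 else 0) = 1 := if_pos rfl
              simp only [hone, if_neg hxa] at *
              omega
            · simp only [if_neg hxa, if_neg hya] at *
              omega
        · show s.T1.length + (s.B1.erase x).length ≤ N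
          omega
        · show (s.T1 ++ (x :: s.T2.dropLast) ++ (s.B1.erase x) ++ (y2 :: s.B2)).length ≤ 2 * N
          rw [hdirlen] at hdir
          simp only [List.length_append, List.length_cons]
          omega
        · show s.T1.length + (x :: s.T2.dropLast).length ≤ N
          simp only [List.length_cons]
          omega
        · intro h'
          exfalso
          have : s.T1.length + (x :: s.T2.dropLast).length < N := h'
          simp only [List.length_cons] at this
          omega
        · rw [if_neg hxT]
          show s.T1.length + (x :: s.T2.dropLast).length = min N (arcT s + 1)
          have ht' : arcT s = s.T1.length + s.T2.length := rfl
          simp only [List.length_cons, ht']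
          omega

    · by_cases hxB2 : x ∈ s.B2
      · -- history hit in B2
        have hxT1 : x ∉ s.T1 := fun hx => hxT (Or.inl hx)
        have hxT2 : x ∉ s.T2 := fun hx => hxT (Or.inr hx)
        have hB2ne : s.B2 ≠ [] := List.ne_nil_of_mem hxB2
        have hb2pos : 1 ≤ s.B2.length := List.length_pos_iff.mpr hB2ne
        have htN : s.T1.length + s.T2.length = N := by
          have ht' : s.T1.length + s.T2.length ≤ N := ht
          rcases Nat.eq_or_lt_of_le ht' with h | h
          · exact h
          · exact absurd (hemp h).2 hB2ne
        set p2 := s.p - 1 with hp2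
        have hp2le : p2 ≤ N := by omega
        have hcx : List.count x s.B2 = 1 := by
          have h1 := hcnt x
          have h2 := List.count_pos_iff.mpr hxB2
          omega
        have hlB2e : (s.B2.erase x).length = s.B2.length - 1 := by
          rw [List.length_erase, if_pos hxB2]
        by_cases hcond : 1 ≤ s.T1.length ∧ (s.T1.length = p2 ∨ p2 < s.T1.length)
        · have hT1ne : s.T1 ≠ [] := by
            rw [← List.length_pos_iff]; omega
          set y := s.T1.getLast hT1ne with hy
          have hyT1 : y ∈ s.T1 := by rw [hy]; exact List.getLast_mem hT1ne
          have hstep : arcStep N s x =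
              ⟨s.T1.dropLast, x :: s.T2, y :: s.B1, s.B2.erase x, p2⟩ := by
            have hrep := arcReplace_pos true ⟨s.T1, s.T2, s.B1, s.B2, p2⟩ hT1ne
              ⟨hcond.1, by
                rcases hcond.2 with h | h
                · exact Or.inl ⟨rfl, h⟩
                · exact Or.inr h⟩
            simp only [arcStep, if_neg hxT, if_neg hxB1, if_pos hxB2, ← hp2, hrep, ← hy]
          have hlT1d : s.T1.dropLast.length = s.T1.length - 1 := List.length_dropLast
          rw [hstep]
          refine ⟨⟨?_, ?_, ?_, ?_, hp2le, ?_⟩, ?_⟩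
          · show (s.T1.dropLast ++ (x :: s.T2) ++ (y :: s.B1) ++ s.B2.erase x).Nodup
            apply nodup4
            intro a
            have h0 := hcnt a
            have e1 := count_eq_dropLast_add s.T1 hT1ne a
            rw [← hy] at e1
            have e2 := count_erase' a x s.B2
            have hyc : 1 ≤ List.count y s.T1 := List.count_pos_iff.mpr hyT1
            simp only [List.count_cons, beq_iff_eq, e2]
            by_cases hxa : x = a
            · have hya : ¬ y = a := by
                intro h'; apply hxT1; rw [hxa, ← h']; exact hyT1
              subst hxa
              have hz1 := List.count_eq_zero.mpr hxT1
              have hone : (if x = x then 1 else 0) = 1 := if_pos rfl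
              simp only [hone, if_neg hya] at *
              omega
            · by_cases hya : y = a
              · subst hya
                have hone : (if y = y then 1 else 0) = 1 := if_pos rfl
                simp only [hone, if_neg hxa] at *
                omega
              · simp only [if_neg hxa, if_neg hya] at *
                omega
          · show s.T1.dropLast.length + (y :: s.B1).length ≤ N
            simp only [List.length_cons]
            omega
          · show (s.T1.dropLast ++ (x :: s.T2) ++ (y :: s.B1) ++ s.B2.erase x).length ≤ 2 * N
            rw [hdirlen] at hdir
            simp only [List.length_append, List.length_cons]
            omega
          · show s.T1.dropLast.length + (x :: s.T2).length ≤ N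
            simp only [List.length_cons]
            omega
          · intro h'
            exfalso
            have : s.T1.dropLast.length + (x :: s.T2).length < N := h'
            simp only [List.length_cons] at this
            omega
          · rw [if_neg hxT]
            show s.T1.dropLast.length + (x :: s.T2).length = min N (arcT s + 1)
            have ht' : arcT s = s.T1.length + s.T2.length := rfl
            simp only [List.length_cons, ht']
            omega
        · have hT2ne : s.T2 ≠ [] := by
            rw [← List.length_pos_iff]
            by_contra h0
            push_neg at h0
            have ht2z : s.T2.length = 0 := by omega
            exact hcond ⟨by omega, Or.inr (by omega)⟩
          set y2 := s.T2.getLast hT2ne with hy2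
          have hyT2 : y2 ∈ s.T2 := by rw [hy2]; exact List.getLast_mem hT2ne
          have hyx : ¬(y2 == x) = true := by
            simp only [beq_iff_eq]
            intro h0; exact hxT2 (h0 ▸ hyT2)
          have hcond' : ¬(1 ≤ s.T1.length ∧
              ((true = true ∧ s.T1.length = p2) ∨ p2 < s.T1.length)) := by
            intro hcc
            apply hcond
            refine ⟨hcc.1, ?_⟩
            rcases hcc.2 with ⟨_, h⟩ | h
            · exact Or.inl h
            · exact Or.inr h
          have hstep : arcStep N s x =
              ⟨s.T1, x :: s.T2.dropLast, s.B1, y2 :: s.B2.erase x, p2⟩ := by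
            have hrep := arcReplace_neg true ⟨s.T1, s.T2, s.B1, s.B2, p2⟩ hT2ne hcond'
            simp only [arcStep, if_neg hxT, if_neg hxB1, if_pos hxB2, ← hp2, hrep,
              List.erase_cons_tail hyx, ← hy2]
          have hlT2d : s.T2.dropLast.length = s.T2.length - 1 := List.length_dropLast
          rw [hstep]
          refine ⟨⟨?_, ?_, ?_, ?_, hp2le, ?_⟩, ?_⟩
          · show (s.T1 ++ (x :: s.T2.dropLast) ++ s.B1 ++ (y2 :: s.B2.erase x)).Nodup
            apply nodup4
            intro a
            have h0 := hcnt a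
            have e1 := count_eq_dropLast_add s.T2 hT2ne a
            rw [← hy2] at e1
            have e2 := count_erase' a x s.B2
            have hyc : 1 ≤ List.count y2 s.T2 := List.count_pos_iff.mpr hyT2
            simp only [List.count_cons, beq_iff_eq, e2]
            by_cases hxa : x = a
            · have hya : ¬ y2 = a := by
                intro h'; apply hxT2; rw [hxa, ← h']; exact hyT2
              subst hxa
              have hz1 := List.count_eq_zero.mpr hxT2
              have hone : (if x = x then 1 else 0) = 1 := if_pos rfl
              simp only [hone, if_neg hya] at *
              omega
            · by_cases hya : y2 = a
              · subst hya
                have hone : (if y2 = y2 then 1 else 0) = 1 := if_pos rfl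
                simp only [hone, if_neg hxa] at *
                omega
              · simp only [if_neg hxa, if_neg hya] at *
                omega
          · show s.T1.length + s.B1.length ≤ N
            omega
          · show (s.T1 ++ (x :: s.T2.dropLast) ++ s.B1 ++ (y2 :: s.B2.erase x)).length ≤ 2 * N
            rw [hdirlen] at hdir
            simp only [List.length_append, List.length_cons]
            omega
          · show s.T1.length + (x :: s.T2.dropLast).length ≤ N
            simp only [List.length_cons]
            omega
          · intro h'
            exfalso
            have : s.T1.length + (x :: s.T2.dropLast).length < N := h'
            simp only [List.length_cons] at this
            omega
          · rw [if_neg hxT]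
            show s.T1.length + (x :: s.T2.dropLast).length = min N (arcT s + 1)
            have ht' : arcT s = s.T1.length + s.T2.length := rfl
            simp only [List.length_cons, ht']
            omega
      · -- complete miss
        have hxT1 : x ∉ s.T1 := fun hx => hxT (Or.inl hx)
        have hxT2 : x ∉ s.T2 := fun hx => hxT (Or.inr hx)
        have hz1 := List.count_eq_zero.mpr hxT1
        have hz2 := List.count_eq_zero.mpr hxT2
        have hz3 := List.count_eq_zero.mpr hxB1
        have hz4 := List.count_eq_zero.mpr hxB2
        have ht' : arcT s = s.T1.length + s.T2.length := rfl
        by_cases hA : s.T1.length + s.B1.length = N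
        · by_cases hA1 : s.T1.length < N
          · -- l1 = N, t1 < N
            have hb1pos : 1 ≤ s.B1.length := by omega
            have hB1ne : s.B1 ≠ [] := List.length_pos_iff.mp (by omega)
            have htN : s.T1.length + s.T2.length = N := by
              rcases Nat.eq_or_lt_of_le (ht : s.T1.length + s.T2.length ≤ N) with h | h
              · exact h
              · exfalso
                have hb0 : s.B1.length = 0 := by rw [(hemp h).1]; rfl
                omega
            have hlB1d : s.B1.dropLast.length = s.B1.length - 1 := List.length_dropLast
            by_cases hcond : 1 ≤ s.T1.length ∧ s.p < s.T1.length
            · have hT1ne : s.T1 ≠ [] := List.length_pos_iff.mp (by omega)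
              set y := s.T1.getLast hT1ne with hy
              have hyT1 : y ∈ s.T1 := by rw [hy]; exact List.getLast_mem hT1ne
              have hstep : arcStep N s x =
                  ⟨x :: s.T1.dropLast, s.T2, y :: s.B1.dropLast, s.B2, s.p⟩ := by
                have hrep := arcReplace_pos false ⟨s.T1, s.T2, s.B1.dropLast, s.B2, s.p⟩
                  hT1ne ⟨hcond.1, Or.inr hcond.2⟩
                simp only [arcStep, if_neg hxT, if_neg hxB1, if_neg hxB2, if_pos hA,
                  if_pos hA1, hrep, ← hy]
              have hlT1d : s.T1.dropLast.length = s.T1.length - 1 := List.length_dropLast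
              rw [hstep]
              refine ⟨⟨?_, ?_, ?_, ?_, hp, ?_⟩, ?_⟩
              · show ((x :: s.T1.dropLast) ++ s.T2 ++ (y :: s.B1.dropLast) ++ s.B2).Nodup
                apply nodup4
                intro a
                have h0 := hcnt a
                have e1 := count_eq_dropLast_add s.T1 hT1ne a
                rw [← hy] at e1
                have d2 : List.count a s.B1.dropLast ≤ List.count a s.B1 :=
                  (List.dropLast_sublist _).count_le a
                have hyc : 1 ≤ List.count y s.T1 := List.count_pos_iff.mpr hyT1
                simp only [List.count_cons, beq_iff_eq]
                by_cases hxa : x = a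
                · have hya : ¬ y = a := by
                    intro h'; apply hxT1; rw [hxa, ← h']; exact hyT1
                  subst hxa
                  have hone : (if x = x then 1 else 0) = 1 := if_pos rfl
                  simp only [hone, if_neg hya] at *
                  omega
                · by_cases hya : y = a
                  · subst hya
                    have hone : (if y = y then 1 else 0) = 1 := if_pos rfl
                    simp only [hone, if_neg hxa] at *
                    omega
                  · simp only [if_neg hxa, if_neg hya] at *
                    omega
              · show (x :: s.T1.dropLast).length + (y :: s.B1.dropLast).length ≤ N
                simp only [List.length_cons]
                omega
              · show ((x :: s.T1.dropLast) ++ s.T2 ++ (y :: s.B1.dropLast) ++ s.B2).length ≤ 2 * N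
                rw [hdirlen] at hdir
                simp only [List.length_append, List.length_cons]
                omega
              · show (x :: s.T1.dropLast).length + s.T2.length ≤ N
                simp only [List.length_cons]
                omega
              · intro h'
                exfalso
                have : (x :: s.T1.dropLast).length + s.T2.length < N := h'
                simp only [List.length_cons] at this
                omega
              · rw [if_neg hxT]
                show (x :: s.T1.dropLast).length + s.T2.length = min N (arcT s + 1)
                simp only [List.length_cons, ht']
                omega
            · have hT2ne : s.T2 ≠ [] := List.length_pos_iff.mp (by omega)
              set y2 := s.T2.getLast hT2ne with hy2
              have hyT2 : y2 ∈ s.T2 := by rw [hy2]; exact List.getLast_mem hT2ne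
              have hcond' : ¬(1 ≤ s.T1.length ∧
                  ((false = true ∧ s.T1.length = s.p) ∨ s.p < s.T1.length)) := by
                intro hcc
                rcases hcc.2 with ⟨hf, _⟩ | hlt2
                · simp at hf
                · exact hcond ⟨hcc.1, hlt2⟩
              have hstep : arcStep N s x =
                  ⟨x :: s.T1, s.T2.dropLast, s.B1.dropLast, y2 :: s.B2, s.p⟩ := by
                have hrep := arcReplace_neg false ⟨s.T1, s.T2, s.B1.dropLast, s.B2, s.p⟩
                  hT2ne hcond'
                simp only [arcStep, if_neg hxT, if_neg hxB1, if_neg hxB2, if_pos hA,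
                  if_pos hA1, hrep, ← hy2]
              have hlT2d : s.T2.dropLast.length = s.T2.length - 1 := List.length_dropLast
              rw [hstep]
              refine ⟨⟨?_, ?_, ?_, ?_, hp, ?_⟩, ?_⟩
              · show ((x :: s.T1) ++ s.T2.dropLast ++ s.B1.dropLast ++ (y2 :: s.B2)).Nodup
                apply nodup4
                intro a
                have h0 := hcnt a
                have e1 := count_eq_dropLast_add s.T2 hT2ne a
                rw [← hy2] at e1
                have d2 : List.count a s.B1.dropLast ≤ List.count a s.B1 :=
                  (List.dropLast_sublist _).count_le a
                have hyc : 1 ≤ List.count y2 s.T2 := List.count_pos_iff.mpr hyT2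
                simp only [List.count_cons, beq_iff_eq]
                by_cases hxa : x = a
                · have hya : ¬ y2 = a := by
                    intro h'; apply hxT2; rw [hxa, ← h']; exact hyT2
                  subst hxa
                  have hone : (if x = x then 1 else 0) = 1 := if_pos rfl
                  simp only [hone, if_neg hya] at *
                  omega
                · by_cases hya : y2 = a
                  · subst hya
                    have hone : (if y2 = y2 then 1 else 0) = 1 := if_pos rfl
                    simp only [hone, if_neg hxa] at *
                    omega
                  · simp only [if_neg hxa, if_neg hya] at *
                    omega
              · show (x :: s.T1).length + s.B1.dropLast.length ≤ N
                simp only [List.length_cons]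
                omega
              · show ((x :: s.T1) ++ s.T2.dropLast ++ s.B1.dropLast ++ (y2 :: s.B2)).length ≤ 2 * N
                rw [hdirlen] at hdir
                simp only [List.length_append, List.length_cons]
                omega
              · show (x :: s.T1).length + s.T2.dropLast.length ≤ N
                simp only [List.length_cons]
                omega
              · intro h'
                exfalso
                have : (x :: s.T1).length + s.T2.dropLast.length < N := h'
                simp only [List.length_cons] at this
                omega
              · rw [if_neg hxT]
                show (x :: s.T1).length + s.T2.dropLast.length = min N (arcT s + 1)
                simp only [List.length_cons, ht']
                omega
          · -- l1 = N, t1 = N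
            have ht1N : s.T1.length = N := by omega
            have ht2z : s.T2.length = 0 := by
              have : s.T1.length + s.T2.length ≤ N := ht
              omega
            have hstep : arcStep N s x =
                ⟨x :: s.T1.dropLast, s.T2, s.B1, s.B2, s.p⟩ := by
              simp only [arcStep, if_neg hxT, if_neg hxB1, if_neg hxB2, if_pos hA, if_neg hA1]
            have hlT1d : s.T1.dropLast.length = s.T1.length - 1 := List.length_dropLast
            rw [hstep]
            refine ⟨⟨?_, ?_, ?_, ?_, hp, ?_⟩, ?_⟩
            · show ((x :: s.T1.dropLast) ++ s.T2 ++ s.B1 ++ s.B2).Nodup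
              apply nodup4
              intro a
              have h0 := hcnt a
              have d1 : List.count a s.T1.dropLast ≤ List.count a s.T1 :=
                (List.dropLast_sublist _).count_le a
              simp only [List.count_cons, beq_iff_eq]
              by_cases hxa : x = a
              · subst hxa
                have hone : (if x = x then 1 else 0) = 1 := if_pos rfl
                simp only [hone] at *
                omega
              · simp only [if_neg hxa] at *
                omega
            · show (x :: s.T1.dropLast).length + s.B1.length ≤ N
              simp only [List.length_cons]
              omega
            · show ((x :: s.T1.dropLast) ++ s.T2 ++ s.B1 ++ s.B2).length ≤ 2 * N
              rw [hdirlen] at hdir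
              simp only [List.length_append, List.length_cons]
              omega
            · show (x :: s.T1.dropLast).length + s.T2.length ≤ N
              simp only [List.length_cons]
              omega
            · intro h'
              exfalso
              have : (x :: s.T1.dropLast).length + s.T2.length < N := h'
              simp only [List.length_cons] at this
              omega
            · rw [if_neg hxT]
              show (x :: s.T1.dropLast).length + s.T2.length = min N (arcT s + 1)
              simp only [List.length_cons, ht']
              omega
        · by_cases hB : s.T1.length + s.B1.length < N ∧
              N ≤ s.T1.length + s.T2.length + s.B1.length + s.B2.length
          · have htN : s.T1.length + s.T2.length = N := by
              rcases Nat.eq_or_lt_of_le (ht : s.T1.length + s.T2.length ≤ N) with h | h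
              · exact h
              · exfalso
                have hb1 : s.B1.length = 0 := by rw [(hemp h).1]; rfl
                have hb2 : s.B2.length = 0 := by rw [(hemp h).2]; rfl
                omega
            by_cases h2N : s.T1.length + s.T2.length + s.B1.length + s.B2.length = 2 * N
            · have hb2pos : 1 ≤ s.B2.length := by omega
              have hB2ne : s.B2 ≠ [] := List.length_pos_iff.mp (by omega)
              have hlB2d : s.B2.dropLast.length = s.B2.length - 1 := List.length_dropLast
              by_cases hcond : 1 ≤ s.T1.length ∧ s.p < s.T1.length
              · have hT1ne : s.T1 ≠ [] := List.length_pos_iff.mp (by omega)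
                set y := s.T1.getLast hT1ne with hy
                have hyT1 : y ∈ s.T1 := by rw [hy]; exact List.getLast_mem hT1ne
                have hstep : arcStep N s x =
                    ⟨x :: s.T1.dropLast, s.T2, y :: s.B1, s.B2.dropLast, s.p⟩ := by
                  have hrep := arcReplace_pos false ⟨s.T1, s.T2, s.B1, s.B2.dropLast, s.p⟩
                    hT1ne ⟨hcond.1, Or.inr hcond.2⟩
                  simp only [arcStep, if_neg hxT, if_neg hxB1, if_neg hxB2, if_neg hA,
                    if_pos hB, if_pos h2N, hrep, ← hy]
                have hlT1d : s.T1.dropLast.length = s.T1.length - 1 := List.length_dropLast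
                rw [hstep]
                refine ⟨⟨?_, ?_, ?_, ?_, hp, ?_⟩, ?_⟩
                · show ((x :: s.T1.dropLast) ++ s.T2 ++ (y :: s.B1) ++ s.B2.dropLast).Nodup
                  apply nodup4
                  intro a
                  have h0 := hcnt a
                  have e1 := count_eq_dropLast_add s.T1 hT1ne a
                  rw [← hy] at e1
                  have d2 : List.count a s.B2.dropLast ≤ List.count a s.B2 :=
                    (List.dropLast_sublist _).count_le a
                  have hyc : 1 ≤ List.count y s.T1 := List.count_pos_iff.mpr hyT1
                  simp only [List.count_cons, beq_iff_eq]
                  by_cases hxa : x = a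
                  · have hya : ¬ y = a := by
                      intro h'; apply hxT1; rw [hxa, ← h']; exact hyT1
                    subst hxa
                    have hone : (if x = x then 1 else 0) = 1 := if_pos rfl
                    simp only [hone, if_neg hya] at *
                    omega
                  · by_cases hya : y = a
                    · subst hya
                      have hone : (if y = y then 1 else 0) = 1 := if_pos rfl
                      simp only [hone, if_neg hxa] at *
                      omega
                    · simp only [if_neg hxa, if_neg hya] at *
                      omega
                · show (x :: s.T1.dropLast).length + (y :: s.B1).length ≤ N
                  simp only [List.length_cons]
                  omega
                · show ((x :: s.T1.dropLast) ++ s.T2 ++ (y :: s.B1) ++ s.B2.dropLast).length ≤ 2 * N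
                  rw [hdirlen] at hdir
                  simp only [List.length_append, List.length_cons]
                  omega
                · show (x :: s.T1.dropLast).length + s.T2.length ≤ N
                  simp only [List.length_cons]
                  omega
                · intro h'
                  exfalso
                  have : (x :: s.T1.dropLast).length + s.T2.length < N := h'
                  simp only [List.length_cons] at this
                  omega
                · rw [if_neg hxT]
                  show (x :: s.T1.dropLast).length + s.T2.length = min N (arcT s + 1)
                  simp only [List.length_cons, ht']
                  omega
              · have hT2ne : s.T2 ≠ [] := List.length_pos_iff.mp (by omega)
                set y2 := s.T2.getLast hT2ne with hy2
                have hyT2 : y2 ∈ s.T2 := by rw [hy2]; exact List.getLast_mem hT2ne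
                have hcond' : ¬(1 ≤ s.T1.length ∧
                    ((false = true ∧ s.T1.length = s.p) ∨ s.p < s.T1.length)) := by
                  intro hcc
                  rcases hcc.2 with ⟨hf, _⟩ | hlt2
                  · simp at hf
                  · exact hcond ⟨hcc.1, hlt2⟩
                have hstep : arcStep N s x =
                    ⟨x :: s.T1, s.T2.dropLast, s.B1, y2 :: s.B2.dropLast, s.p⟩ := by
                  have hrep := arcReplace_neg false ⟨s.T1, s.T2, s.B1, s.B2.dropLast, s.p⟩
                    hT2ne hcond'
                  simp only [arcStep, if_neg hxT, if_neg hxB1, if_neg hxB2, if_neg hA,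
                    if_pos hB, if_pos h2N, hrep, ← hy2]
                have hlT2d : s.T2.dropLast.length = s.T2.length - 1 := List.length_dropLast
                rw [hstep]
                refine ⟨⟨?_, ?_, ?_, ?_, hp, ?_⟩, ?_⟩
                · show ((x :: s.T1) ++ s.T2.dropLast ++ s.B1 ++ (y2 :: s.B2.dropLast)).Nodup
                  apply nodup4
                  intro a
                  have h0 := hcnt a
                  have e1 := count_eq_dropLast_add s.T2 hT2ne a
                  rw [← hy2] at e1
                  have d2 : List.count a s.B2.dropLast ≤ List.count a s.B2 :=
                    (List.dropLast_sublist _).count_le a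
                  have hyc : 1 ≤ List.count y2 s.T2 := List.count_pos_iff.mpr hyT2
                  simp only [List.count_cons, beq_iff_eq]
                  by_cases hxa : x = a
                  · have hya : ¬ y2 = a := by
                      intro h'; apply hxT2; rw [hxa, ← h']; exact hyT2
                    subst hxa
                    have hone : (if x = x then 1 else 0) = 1 := if_pos rfl
                    simp only [hone, if_neg hya] at *
                    omega
                  · by_cases hya : y2 = a
                    · subst hya
                      have hone : (if y2 = y2 then 1 else 0) = 1 := if_pos rfl
                      simp only [hone, if_neg hxa] at *
                      omega
                    · simp only [if_neg hxa, if_neg hya] at *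
                      omega
                · show (x :: s.T1).length + s.B1.length ≤ N
                  simp only [List.length_cons]
                  omega
                · show ((x :: s.T1) ++ s.T2.dropLast ++ s.B1 ++ (y2 :: s.B2.dropLast)).length ≤ 2 * N
                  rw [hdirlen] at hdir
                  simp only [List.length_append, List.length_cons]
                  omega
                · show (x :: s.T1).length + s.T2.dropLast.length ≤ N
                  simp only [List.length_cons]
                  omega
                · intro h'
                  exfalso
                  have : (x :: s.T1).length + s.T2.dropLast.length < N := h'
                  simp only [List.length_cons] at this
                  omega
                · rw [if_neg hxT]
                  show (x :: s.T1).length + s.T2.dropLast.length = min N (arcT s + 1)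
                  simp only [List.length_cons, ht']
                  omega
            · -- directory not full (d < 2N)
              have hdlt : s.T1.length + s.T2.length + s.B1.length + s.B2.length < 2 * N := by
                rw [hdirlen] at hdir
                omega
              by_cases hcond : 1 ≤ s.T1.length ∧ s.p < s.T1.length
              · have hT1ne : s.T1 ≠ [] := List.length_pos_iff.mp (by omega)
                set y := s.T1.getLast hT1ne with hy
                have hyT1 : y ∈ s.T1 := by rw [hy]; exact List.getLast_mem hT1ne
                have hstep : arcStep N s x =
                    ⟨x :: s.T1.dropLast, s.T2, y :: s.B1, s.B2, s.p⟩ := by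
                  have hrep := arcReplace_pos false s hT1ne ⟨hcond.1, Or.inr hcond.2⟩
                  simp only [arcStep, if_neg hxT, if_neg hxB1, if_neg hxB2, if_neg hA,
                    if_pos hB, if_neg h2N, hrep, ← hy]
                have hlT1d : s.T1.dropLast.length = s.T1.length - 1 := List.length_dropLast
                rw [hstep]
                refine ⟨⟨?_, ?_, ?_, ?_, hp, ?_⟩, ?_⟩
                · show ((x :: s.T1.dropLast) ++ s.T2 ++ (y :: s.B1) ++ s.B2).Nodup
                  apply nodup4
                  intro a
                  have h0 := hcnt a
                  have e1 := count_eq_dropLast_add s.T1 hT1ne a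
                  rw [← hy] at e1
                  have hyc : 1 ≤ List.count y s.T1 := List.count_pos_iff.mpr hyT1
                  simp only [List.count_cons, beq_iff_eq]
                  by_cases hxa : x = a
                  · have hya : ¬ y = a := by
                      intro h'; apply hxT1; rw [hxa, ← h']; exact hyT1
                    subst hxa
                    have hone : (if x = x then 1 else 0) = 1 := if_pos rfl
                    simp only [hone, if_neg hya] at *
                    omega
                  · by_cases hya : y = a
                    · subst hya
                      have hone : (if y = y then 1 else 0) = 1 := if_pos rfl
                      simp only [hone, if_neg hxa] at *
                      omega
                    · simp only [if_neg hxa, if_neg hya] at *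
                      omega
                · show (x :: s.T1.dropLast).length + (y :: s.B1).length ≤ N
                  simp only [List.length_cons]
                  omega
                · show ((x :: s.T1.dropLast) ++ s.T2 ++ (y :: s.B1) ++ s.B2).length ≤ 2 * N
                  simp only [List.length_append, List.length_cons]
                  omega
                · show (x :: s.T1.dropLast).length + s.T2.length ≤ N
                  simp only [List.length_cons]
                  omega
                · intro h'
                  exfalso
                  have : (x :: s.T1.dropLast).length + s.T2.length < N := h'
                  simp only [List.length_cons] at this
                  omega
                · rw [if_neg hxT]
                  show (x :: s.T1.dropLast).length + s.T2.length = min N (arcT s + 1)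
                  simp only [List.length_cons, ht']
                  omega
              · have hT2ne : s.T2 ≠ [] := List.length_pos_iff.mp (by omega)
                set y2 := s.T2.getLast hT2ne with hy2
                have hyT2 : y2 ∈ s.T2 := by rw [hy2]; exact List.getLast_mem hT2ne
                have hcond' : ¬(1 ≤ s.T1.length ∧
                    ((false = true ∧ s.T1.length = s.p) ∨ s.p < s.T1.length)) := by
                  intro hcc
                  rcases hcc.2 with ⟨hf, _⟩ | hlt2
                  · simp at hf
                  · exact hcond ⟨hcc.1, hlt2⟩
                have hstep : arcStep N s x =
                    ⟨x :: s.T1, s.T2.dropLast, s.B1, y2 :: s.B2, s.p⟩ := by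
                  have hrep := arcReplace_neg false s hT2ne hcond'
                  simp only [arcStep, if_neg hxT, if_neg hxB1, if_neg hxB2, if_neg hA,
                    if_pos hB, if_neg h2N, hrep, ← hy2]
                have hlT2d : s.T2.dropLast.length = s.T2.length - 1 := List.length_dropLast
                rw [hstep]
                refine ⟨⟨?_, ?_, ?_, ?_, hp, ?_⟩, ?_⟩
                · show ((x :: s.T1) ++ s.T2.dropLast ++ s.B1 ++ (y2 :: s.B2)).Nodup
                  apply nodup4
                  intro a
                  have h0 := hcnt a
                  have e1 := count_eq_dropLast_add s.T2 hT2ne a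
                  rw [← hy2] at e1
                  have hyc : 1 ≤ List.count y2 s.T2 := List.count_pos_iff.mpr hyT2
                  simp only [List.count_cons, beq_iff_eq]
                  by_cases hxa : x = a
                  · have hya : ¬ y2 = a := by
                      intro h'; apply hxT2; rw [hxa, ← h']; exact hyT2
                    subst hxa
                    have hone : (if x = x then 1 else 0) = 1 := if_pos rfl
                    simp only [hone, if_neg hya] at *
                    omega
                  · by_cases hya : y2 = a
                    · subst hya
                      have hone : (if y2 = y2 then 1 else 0) = 1 := if_pos rfl
                      simp only [hone, if_neg hxa] at *
                      omega
                    · simp only [if_neg hxa, if_neg hya] at *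
                      omega
                · show (x :: s.T1).length + s.B1.length ≤ N
                  simp only [List.length_cons]
                  omega
                · show ((x :: s.T1) ++ s.T2.dropLast ++ s.B1 ++ (y2 :: s.B2)).length ≤ 2 * N
                  simp only [List.length_append, List.length_cons]
                  omega
                · show (x :: s.T1).length + s.T2.dropLast.length ≤ N
                  simp only [List.length_cons]
                  omega
                · intro h'
                  exfalso
                  have : (x :: s.T1).length + s.T2.dropLast.length < N := h'
                  simp only [List.length_cons] at this
                  omega
                · rw [if_neg hxT]
                  show (x :: s.T1).length + s.T2.dropLast.length = min N (arcT s + 1)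
                  simp only [List.length_cons, ht']
                  omega
          · -- trivial miss: just insert
            have hd1 : s.T1.length + s.B1.length < N := by
              rcases Nat.lt_or_ge (s.T1.length + s.B1.length) N with h | h
              · exact h
              · exact absurd (by omega : s.T1.length + s.B1.length = N) hA
            have hdsum : s.T1.length + s.T2.length + s.B1.length + s.B2.length < N := by
              by_contra h0
              push_neg at h0
              exact hB ⟨hd1, h0⟩
            have hstep : arcStep N s x = ⟨x :: s.T1, s.T2, s.B1, s.B2, s.p⟩ := by
              simp only [arcStep, if_neg hxT, if_neg hxB1, if_neg hxB2, if_neg hA, if_neg hB]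
            rw [hstep]
            refine ⟨⟨?_, ?_, ?_, ?_, hp, ?_⟩, ?_⟩
            · show ((x :: s.T1) ++ s.T2 ++ s.B1 ++ s.B2).Nodup
              apply nodup4
              intro a
              have h0 := hcnt a
              simp only [List.count_cons, beq_iff_eq]
              by_cases hxa : x = a
              · subst hxa
                have hone : (if x = x then 1 else 0) = 1 := if_pos rfl
                simp only [hone] at *
                omega
              · simp only [if_neg hxa] at *
                omega
            · show (x :: s.T1).length + s.B1.length ≤ N
              simp only [List.length_cons]
              omega
            · show ((x :: s.T1) ++ s.T2 ++ s.B1 ++ s.B2).length ≤ 2 * N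
              simp only [List.length_append, List.length_cons]
              omega
            · show (x :: s.T1).length + s.T2.length ≤ N
              simp only [List.length_cons]
              omega
            · intro h'
              have h'' : s.T1.length + s.T2.length < N := by
                have : (x :: s.T1).length + s.T2.length < N := h'
                simp only [List.length_cons] at this
                omega
              exact hemp h''
            · rw [if_neg hxT]
              show (x :: s.T1).length + s.T2.length = min N (arcT s + 1)
              simp only [List.length_cons, ht']
              omega

lemma inv_run (N : ℕ) (hN : 1 ≤ N) :
    ∀ (l : List Page) (s : ArcState), Inv N s →
      Inv N (arcRun N s l) ∧ arcT (arcRun N s l) = min N (arcT s + arcCost N s l)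
  | [], s, h => by
      refine ⟨h, ?_⟩
      have := h.2.2.2.1
      simp [arcRun, arcCost]
      omega
  | x :: xs, s, h => by
      obtain ⟨h1, h2⟩ := inv_step N hN s x h
      obtain ⟨h3, h4⟩ := inv_run N hN xs (arcStep N s x) h1
      refine ⟨by simpa [arcRun] using h3, ?_⟩
      have hcost : arcCost N s (x :: xs)
          = (if x ∈ s.T1 ∨ x ∈ s.T2 then 0 else 1) + arcCost N (arcStep N s x) xs := rfl
      have hrun : arcRun N s (x :: xs) = arcRun N (arcStep N s x) xs := rfl
      rw [hrun, h4, h2, hcost]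
      omega

lemma inv_init (N : ℕ) : Inv N ArcState.init := by
  refine ⟨by simp [arcDir, ArcState.init], by simp [ArcState.init], ?_, ?_, ?_, ?_⟩ <;>
    simp [arcDir, arcT, ArcState.init]

end ArcAux

/-- Case IV. In the parallel execution of ARC and OPT,
after phase `P(0)`, when ARC misses on `σ_j` and the requested page is in
neither `B1` nor `B2` (so ARC evicts `LRU(L1)` if `ℓ₁ = N`, or evicts
`LRU(L2)` if `ℓ₁ < N` and the directory is full, calls REPLACE, and inserts
the page at `MRU(T1)`), the change of
`Φ = p − [(b₁'−t) + 2(t₁'−t) + 3(b₂'−t) + 4(t₂'−t)]` (w.r.t. OPT's cache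
`C (j+1)`) satisfies `ΔΦ ≤ −1` in both cases. -/
theorem arc_directory_miss_potential (N : ℕ) (σ : List Page) (C : ℕ → Finset Page)
    (hC : OptExec N σ C) (hCopt : optFaults σ C = optCost N σ)
    (j : ℕ) (hj : j < σ.length)
    (hphase : N ≤ arcCost N ArcState.init (σ.take j))
    (s : ArcState) (hs : s = arcRun N ArcState.init (σ.take j))
    (hmiss : σ.getD j 0 ∉ s.T1 ∧ σ.getD j 0 ∉ s.T2)
    (hnohist : σ.getD j 0 ∉ s.B1 ∧ σ.getD j 0 ∉ s.B2) :
    (s.T1.length + s.B1.length = N →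
      arcPhi (arcStep N s (σ.getD j 0)) (C (j + 1)) - arcPhi s (C (j + 1)) ≤ -1) ∧
    (s.T1.length + s.B1.length < N →
      arcPhi (arcStep N s (σ.getD j 0)) (C (j + 1)) - arcPhi s (C (j + 1)) ≤ -1) := by
    classical
  obtain ⟨hmiss1, hmiss2⟩ := hmiss
  obtain ⟨hnoh1, hnoh2⟩ := hnohist
  set x := σ.getD j 0 with hxdef
  set O := C (j + 1) with hOdef
  have hxO : x ∈ O := (hC.2.2 j hj).1
  have hcard : O.card ≤ N := hC.2.1 (j + 1)
  have hN : 1 ≤ N := le_trans (Finset.card_pos.mpr ⟨x, hxO⟩) hcard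
  obtain ⟨hInv, htrun⟩ := ArcAux.inv_run N hN (σ.take j) ArcState.init (ArcAux.inv_init N)
  rw [← hs] at hInv htrun
  obtain ⟨hnd, hl1, hdir, ht, hp, hemp⟩ := hInv
  have htsum : s.T1.length + s.T2.length = N := by
    have h0 : arcT ArcState.init = 0 := rfl
    have h1 : arcT s = s.T1.length + s.T2.length := rfl
    rw [h0, h1] at htrun
    omega
  have hcnt : ∀ a, List.count a s.T1 + List.count a s.T2 + List.count a s.B1
      + List.count a s.B2 ≤ 1 := ArcAux.count4 _ _ _ _ hnd
  have hndL1 : (s.T1 ++ s.B1).Nodup := ArcAux.nodup2 _ _ (fun a => by have := hcnt a; omega)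
  have hndL2 : (s.T2 ++ s.B2).Nodup := ArcAux.nodup2 _ _ (fun a => by have := hcnt a; omega)
  have hndT1 : s.T1.Nodup := (List.nodup_append.mp hndL1).1
  have hxT1B1 : x ∉ s.T1 ++ s.B1 := by simp [hmiss1, hnoh1]
  have hfresh1 : topLen (s.T1 ++ s.B1) O + 1 ≤ O.card :=
    ArcAux.topLen_fresh hndL1 hxO hxT1B1
  have hfreshT1 : topLen s.T1 O + 1 ≤ O.card := ArcAux.topLen_fresh hndT1 hxO hmiss1
  have hlenL1 : (s.T1 ++ s.B1).length = s.T1.length + s.B1.length := List.length_append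
  have hlenL2 : (s.T2 ++ s.B2).length = s.T2.length + s.B2.length := List.length_append
  have hxT : ¬(x ∈ s.T1 ∨ x ∈ s.T2) := by
    rintro (h | h)
    · exact hmiss1 h
    · exact hmiss2 h
  have hxB1 : x ∉ s.B1 := hnoh1
  have hxB2 : x ∉ s.B2 := hnoh2
  constructor
  · -- Case IV(a): l1 = N
    intro hA
    by_cases hA1 : s.T1.length < N
    · -- B1 nonempty; LRU(B1) is discarded, then REPLACE
      have hb1pos : 1 ≤ s.B1.length := by omega
      have hB1ne : s.B1 ≠ [] := List.length_pos_iff.mp (by omega)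
      have hltL1 : topLen (s.T1 ++ s.B1) O < (s.T1 ++ s.B1).length := by
        rw [hlenL1]; omega
      have F1 : ArcAux.ft s.T1 s.B1.dropLast O = ArcAux.ft s.T1 s.B1 O :=
        ArcAux.ft_dropLast_B _ _ _ hndL1 hB1ne hltL1
      have hxB1d : x ∉ s.B1.dropLast := fun h => hnoh1 ((List.dropLast_sublist _).subset h)
      by_cases hcond : 1 ≤ s.T1.length ∧ s.p < s.T1.length
      · have hT1ne : s.T1 ≠ [] := List.length_pos_iff.mp (by omega)
        set y := s.T1.getLast hT1ne with hy
        have hyT1 : y ∈ s.T1 := by rw [hy]; exact List.getLast_mem hT1ne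
        have hstep : arcStep N s x =
            ⟨x :: s.T1.dropLast, s.T2, y :: s.B1.dropLast, s.B2, s.p⟩ := by
          have hrep := ArcAux.arcReplace_pos false ⟨s.T1, s.T2, s.B1.dropLast, s.B2, s.p⟩
            hT1ne ⟨hcond.1, Or.inr hcond.2⟩
          simp only [arcStep, if_neg hxT, if_neg hxB1, if_neg hxB2, if_pos hA,
            if_pos hA1, hrep, ← hy]
        have hndT1B1d : (s.T1 ++ s.B1.dropLast).Nodup := ArcAux.nodup2 _ _ (fun a => by
          have h1 := hcnt a
          have h2 := (List.dropLast_sublist s.B1).count_le a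
          omega)
        have F2 := ArcAux.key_replace 1 s.T1 s.B1.dropLast O hT1ne hndT1B1d
        rw [← hy] at F2
        have hxy : ¬ x = y := fun h => hmiss1 (h ▸ hyT1)
        have hxyB : x ∉ y :: s.B1.dropLast := by simp [hxy, hxB1d]
        have F3 : ArcAux.ft (x :: s.T1.dropLast) (y :: s.B1.dropLast) O
            = ArcAux.ft s.T1.dropLast (y :: s.B1.dropLast) O := ArcAux.ft_cons hxO hxyB
        have F4 : topLen (x :: s.T1.dropLast) O = topLen s.T1.dropLast O + 1 :=
          ArcAux.topLen_cons hxO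
        have F5a : (x :: s.T1.dropLast).length = s.T1.dropLast.length + 1 := rfl
        have F5b : s.T1.dropLast.length = s.T1.length - 1 := List.length_dropLast
        rw [hstep]
        simp only [ArcAux.arcPhi_eq]
        omega
      · have hT2ne : s.T2 ≠ [] := List.length_pos_iff.mp (by omega)
        set y2 := s.T2.getLast hT2ne with hy2
        have hcond' : ¬(1 ≤ s.T1.length ∧
            ((false = true ∧ s.T1.length = s.p) ∨ s.p < s.T1.length)) := by
          intro hcc
          rcases hcc.2 with ⟨hf, _⟩ | hlt2
          · simp at hf
          · exact hcond ⟨hcc.1, hlt2⟩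
        have hstep : arcStep N s x =
            ⟨x :: s.T1, s.T2.dropLast, s.B1.dropLast, y2 :: s.B2, s.p⟩ := by
          have hrep := ArcAux.arcReplace_neg false ⟨s.T1, s.T2, s.B1.dropLast, s.B2, s.p⟩
            hT2ne hcond'
          simp only [arcStep, if_neg hxT, if_neg hxB1, if_neg hxB2, if_pos hA,
            if_pos hA1, hrep, ← hy2]
        have F2 := ArcAux.key_replace 3 s.T2 s.B2 O hT2ne hndL2
        rw [← hy2] at F2
        have F3 : ArcAux.ft (x :: s.T1) s.B1.dropLast O
            = ArcAux.ft s.T1 s.B1.dropLast O := ArcAux.ft_cons hxO hxB1d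
        have F4 : topLen (x :: s.T1) O = topLen s.T1 O + 1 := ArcAux.topLen_cons hxO
        have F5a : (x :: s.T1).length = s.T1.length + 1 := rfl
        have F5b : s.T2.dropLast.length = s.T2.length - 1 := List.length_dropLast
        rw [hstep]
        simp only [ArcAux.arcPhi_eq]
        omega
    · -- t1 = N: LRU(T1) discarded
      have ht1N : s.T1.length = N := by omega
      have hB1nil : s.B1 = [] := List.length_eq_zero_iff.mp (by omega)
      have hstep : arcStep N s x = ⟨x :: s.T1.dropLast, s.T2, s.B1, s.B2, s.p⟩ := by
        simp only [arcStep, if_neg hxT, if_neg hxB1, if_neg hxB2, if_pos hA, if_neg hA1]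
      have hltT1 : topLen s.T1 O < s.T1.length := by omega
      have F4a : topLen s.T1.dropLast O = topLen s.T1 O := ArcAux.topLen_dropLast_eq hltT1
      have F4 : topLen (x :: s.T1.dropLast) O = topLen s.T1.dropLast O + 1 :=
        ArcAux.topLen_cons hxO
      have F1 : ArcAux.ft (x :: s.T1.dropLast) s.B1 O = 0 := by
        rw [hB1nil]; exact ArcAux.ft_nil _ _
      have F2 : ArcAux.ft s.T1 s.B1 O = 0 := by
        rw [hB1nil]; exact ArcAux.ft_nil _ _
      have F5a : (x :: s.T1.dropLast).length = s.T1.dropLast.length + 1 := rfl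
      have F5b : s.T1.dropLast.length = s.T1.length - 1 := List.length_dropLast
      rw [hstep]
      simp only [ArcAux.arcPhi_eq]
      omega
  · -- Case IV(b): l1 < N
    intro hAlt
    have hA : ¬(s.T1.length + s.B1.length = N) := by omega
    have hBright : N ≤ s.T1.length + s.T2.length + s.B1.length + s.B2.length := by omega
    have hB : s.T1.length + s.B1.length < N ∧
        N ≤ s.T1.length + s.T2.length + s.B1.length + s.B2.length := ⟨hAlt, hBright⟩
    by_cases h2N : s.T1.length + s.T2.length + s.B1.length + s.B2.length = 2 * N
    · -- directory full: LRU(B2) discarded, then REPLACE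
      have hb2pos : 1 ≤ s.B2.length := by omega
      have hB2ne : s.B2 ≠ [] := List.length_pos_iff.mp (by omega)
      have hltL2 : topLen (s.T2 ++ s.B2) O < (s.T2 ++ s.B2).length := by
        have := ArcAux.topLen_le_card (O := O) hndL2
        rw [hlenL2]
        omega
      have F1 : ArcAux.ft s.T2 s.B2.dropLast O = ArcAux.ft s.T2 s.B2 O :=
        ArcAux.ft_dropLast_B _ _ _ hndL2 hB2ne hltL2
      by_cases hcond : 1 ≤ s.T1.length ∧ s.p < s.T1.length
      · have hT1ne : s.T1 ≠ [] := List.length_pos_iff.mp (by omega)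
        set y := s.T1.getLast hT1ne with hy
        have hyT1 : y ∈ s.T1 := by rw [hy]; exact List.getLast_mem hT1ne
        have hstep : arcStep N s x =
            ⟨x :: s.T1.dropLast, s.T2, y :: s.B1, s.B2.dropLast, s.p⟩ := by
          have hrep := ArcAux.arcReplace_pos false ⟨s.T1, s.T2, s.B1, s.B2.dropLast, s.p⟩
            hT1ne ⟨hcond.1, Or.inr hcond.2⟩
          simp only [arcStep, if_neg hxT, if_neg hxB1, if_neg hxB2, if_neg hA,
            if_pos hB, if_pos h2N, hrep, ← hy]
        have F2 := ArcAux.key_replace 1 s.T1 s.B1 O hT1ne hndL1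
        rw [← hy] at F2
        have hxy : ¬ x = y := fun h => hmiss1 (h ▸ hyT1)
        have hxyB : x ∉ y :: s.B1 := by simp [hxy, hnoh1]
        have F3 : ArcAux.ft (x :: s.T1.dropLast) (y :: s.B1) O
            = ArcAux.ft s.T1.dropLast (y :: s.B1) O := ArcAux.ft_cons hxO hxyB
        have F4 : topLen (x :: s.T1.dropLast) O = topLen s.T1.dropLast O + 1 :=
          ArcAux.topLen_cons hxO
        have F5a : (x :: s.T1.dropLast).length = s.T1.dropLast.length + 1 := rfl
        have F5b : s.T1.dropLast.length = s.T1.length - 1 := List.length_dropLast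
        rw [hstep]
        simp only [ArcAux.arcPhi_eq]
        omega
      · have hT2ne : s.T2 ≠ [] := List.length_pos_iff.mp (by omega)
        set y2 := s.T2.getLast hT2ne with hy2
        have hcond' : ¬(1 ≤ s.T1.length ∧
            ((false = true ∧ s.T1.length = s.p) ∨ s.p < s.T1.length)) := by
          intro hcc
          rcases hcc.2 with ⟨hf, _⟩ | hlt2
          · simp at hf
          · exact hcond ⟨hcc.1, hlt2⟩
        have hstep : arcStep N s x =
            ⟨x :: s.T1, s.T2.dropLast, s.B1, y2 :: s.B2.dropLast, s.p⟩ := by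
          have hrep := ArcAux.arcReplace_neg false ⟨s.T1, s.T2, s.B1, s.B2.dropLast, s.p⟩
            hT2ne hcond'
          simp only [arcStep, if_neg hxT, if_neg hxB1, if_neg hxB2, if_neg hA,
            if_pos hB, if_pos h2N, hrep, ← hy2]
        have hndT2B2d : (s.T2 ++ s.B2.dropLast).Nodup := ArcAux.nodup2 _ _ (fun a => by
          have h1 := hcnt a
          have h2 := (List.dropLast_sublist s.B2).count_le a
          omega)
        have F2 := ArcAux.key_replace 3 s.T2 s.B2.dropLast O hT2ne hndT2B2d
        rw [← hy2] at F2
        have F3 : ArcAux.ft (x :: s.T1) s.B1 O = ArcAux.ft s.T1 s.B1 O :=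
          ArcAux.ft_cons hxO hnoh1
        have F4 : topLen (x :: s.T1) O = topLen s.T1 O + 1 := ArcAux.topLen_cons hxO
        have F5a : (x :: s.T1).length = s.T1.length + 1 := rfl
        have F5b : s.T2.dropLast.length = s.T2.length - 1 := List.length_dropLast
        rw [hstep]
        simp only [ArcAux.arcPhi_eq]
        omega
    · -- directory not full: just REPLACE
      by_cases hcond : 1 ≤ s.T1.length ∧ s.p < s.T1.length
      · have hT1ne : s.T1 ≠ [] := List.length_pos_iff.mp (by omega)
        set y := s.T1.getLast hT1ne with hy
        have hyT1 : y ∈ s.T1 := by rw [hy]; exact List.getLast_mem hT1ne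
        have hstep : arcStep N s x =
            ⟨x :: s.T1.dropLast, s.T2, y :: s.B1, s.B2, s.p⟩ := by
          have hrep := ArcAux.arcReplace_pos false s hT1ne ⟨hcond.1, Or.inr hcond.2⟩
          simp only [arcStep, if_neg hxT, if_neg hxB1, if_neg hxB2, if_neg hA,
            if_pos hB, if_neg h2N, hrep, ← hy]
        have F2 := ArcAux.key_replace 1 s.T1 s.B1 O hT1ne hndL1
        rw [← hy] at F2
        have hxy : ¬ x = y := fun h => hmiss1 (h ▸ hyT1)
        have hxyB : x ∉ y :: s.B1 := by simp [hxy, hnoh1]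
        have F3 : ArcAux.ft (x :: s.T1.dropLast) (y :: s.B1) O
            = ArcAux.ft s.T1.dropLast (y :: s.B1) O := ArcAux.ft_cons hxO hxyB
        have F4 : topLen (x :: s.T1.dropLast) O = topLen s.T1.dropLast O + 1 :=
          ArcAux.topLen_cons hxO
        have F5a : (x :: s.T1.dropLast).length = s.T1.dropLast.length + 1 := rfl
        have F5b : s.T1.dropLast.length = s.T1.length - 1 := List.length_dropLast
        rw [hstep]
        simp only [ArcAux.arcPhi_eq]
        omega
      · have hT2ne : s.T2 ≠ [] := List.length_pos_iff.mp (by omega)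
        set y2 := s.T2.getLast hT2ne with hy2
        have hcond' : ¬(1 ≤ s.T1.length ∧
            ((false = true ∧ s.T1.length = s.p) ∨ s.p < s.T1.length)) := by
          intro hcc
          rcases hcc.2 with ⟨hf, _⟩ | hlt2
          · simp at hf
          · exact hcond ⟨hcc.1, hlt2⟩
        have hstep : arcStep N s x =
            ⟨x :: s.T1, s.T2.dropLast, s.B1, y2 :: s.B2, s.p⟩ := by
          have hrep := ArcAux.arcReplace_neg false s hT2ne hcond'
          simp only [arcStep, if_neg hxT, if_neg hxB1, if_neg hxB2, if_neg hA,
            if_pos hB, if_neg h2N, hrep, ← hy2]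
        have F2 := ArcAux.key_replace 3 s.T2 s.B2 O hT2ne hndL2
        rw [← hy2] at F2
        have F3 : ArcAux.ft (x :: s.T1) s.B1 O = ArcAux.ft s.T1 s.B1 O :=
          ArcAux.ft_cons hxO hnoh1
        have F4 : topLen (x :: s.T1) O = topLen s.T1 O + 1 := ArcAux.topLen_cons hxO
        have F5a : (x :: s.T1).length = s.T1.length + 1 := rfl
        have F5b : s.T2.dropLast.length = s.T2.length - 1 := List.length_dropLast
        rw [hstep]
        simp only [ArcAux.arcPhi_eq]
        omega
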